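/- The degree-2 component of the apolarity annihilator of the cubic y_1^2 y_3 + y_2 y_3^2 in C[x_1,x_2,x_3] is spanned by x_1² − x_2x_3, x_1x_2, x_2², and these three quadrics have a common zero in C^3 away from the origin. -/

import Mathlib

open MvPolynomial

noncomputable section

lemma pd_comm {n : ℕ} (i j : Fin n) (p : MvPolynomial (Fin n) ℂ) :
    pderiv i (pderiv j p) = pderiv j (pderiv i p) := by
  classical
  induction p using MvPolynomial.induction_on' with
  | monomial s a =>
    rcases eq_or_ne i j with rfl | hij
    · rfl
    · have e1 : (s - Finsupp.single j 1 : Fin n →₀ ℕ) i = s i := by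
        simp [Finsupp.sub_apply, Finsupp.single_apply, (Ne.symm hij)]
      have e2 : (s - Finsupp.single i 1 : Fin n →₀ ℕ) j = s j := by
        simp [Finsupp.sub_apply, Finsupp.single_apply, hij]
      rw [pderiv_monomial, pderiv_monomial, pderiv_monomial, pderiv_monomial, e1, e2,
        tsub_right_comm]
      ring_nf
  | add p q hp hq => simp [map_add, hp, hq]

lemma pdE_comm {n : ℕ} (i j : Fin n) :
    Commute ((pderiv i : Derivation ℂ (MvPolynomial (Fin n) ℂ) _).toLinearMap)
      ((pderiv j : Derivation ℂ (MvPolynomial (Fin n) ℂ) _).toLinearMap) := by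
  apply LinearMap.ext
  intro p
  exact pd_comm i j p

/-- The differential operator `∂^m` on polynomials. -/
def dOp {n : ℕ} (m : Fin n →₀ ℕ) : Module.End ℂ (MvPolynomial (Fin n) ℂ) :=
  Finset.univ.noncommProd
    (fun i => ((pderiv i : Derivation ℂ (MvPolynomial (Fin n) ℂ) _).toLinearMap) ^ (m i))
    (fun i _ j _ _ => (pdE_comm i j).pow_pow _ _)

lemma dOp_add {n : ℕ} (a b : Fin n →₀ ℕ) : dOp (a + b) = dOp a * dOp b := by
  classical
  unfold dOp
  refine Eq.trans ?_ (Finset.noncommProd_mul_distrib _ _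
    (fun i _ j _ _ => (pdE_comm i j).pow_pow _ _) (fun i _ j _ _ => (pdE_comm i j).pow_pow _ _)
    (fun i _ j _ _ => (pdE_comm i j).pow_pow _ _))
  · apply Finset.noncommProd_congr rfl
    intro i _
    simp [Finsupp.add_apply, Pi.mul_apply, pow_add]
  all_goals exact fun i _ j _ _ => (pdE_comm i j).pow_pow _ _

/-- The apolarity action of `ℂ[x_1,…,x_n]` on `ℂ[y_1,…,y_n]` (both realized as
`MvPolynomial (Fin n) ℂ`), as an algebra homomorphism into endomorphisms. -/
def diamondHom {n : ℕ} :
    MvPolynomial (Fin n) ℂ →ₐ[ℂ] Module.End ℂ (MvPolynomial (Fin n) ℂ) :=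
  AddMonoidAlgebra.lift ℂ _ (Fin n →₀ ℕ)
    { toFun := fun m => dOp (Multiplicative.toAdd m)
      map_one' := by
        simp only [toAdd_one, dOp]
        apply Finset.noncommProd_eq_pow_card (m := 1) _ _ _ _ |>.trans (one_pow _)
        intro i _
        simp
      map_mul' := fun a b => by
        simpa using dOp_add (Multiplicative.toAdd a) (Multiplicative.toAdd b) }

/-- `h ⋄ F` : the result of applying the differential operator `h(∂/∂y₁,…,∂/∂yₙ)` to `F`. -/
def diamond {n : ℕ} (h F : MvPolynomial (Fin n) ℂ) : MvPolynomial (Fin n) ℂ :=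
  diamondHom h F

/-- The apolarity annihilator ideal `F^⊥ = {h : h ⋄ F = 0}`. -/
def perpIdeal {n : ℕ} (F : MvPolynomial (Fin n) ℂ) : Ideal (MvPolynomial (Fin n) ℂ) where
  carrier := {h | diamond h F = 0}
  zero_mem' := by simp [diamond]
  add_mem' := by
    intro a b ha hb
    simp only [Set.mem_setOf_eq, diamond, map_add, LinearMap.add_apply] at *
    rw [ha, hb, add_zero]
  smul_mem' := by
    intro c x hx
    simp only [Set.mem_setOf_eq, diamond, smul_eq_mul, map_mul, Module.End.mul_apply] at *
    rw [hx, map_zero]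



-- ===== auxiliary lemmas =====

lemma diamond_monomial {n : ℕ} (m : Fin n →₀ ℕ) (c : ℂ) (F : MvPolynomial (Fin n) ℂ) :
    diamond (monomial m c) F = c • dOp m F := by
  have h2 : diamondHom (monomial m c) = c • dOp m := by
    have : (monomial m c : MvPolynomial (Fin n) ℂ) = AddMonoidAlgebra.single m c := rfl
    rw [diamondHom, this]
    exact AddMonoidAlgebra.lift_single (R := ℂ) (A := Module.End ℂ (MvPolynomial (Fin n) ℂ)) _ m c
  rw [diamond, h2]
  rfl

lemma dOp3 (m : Fin 3 →₀ ℕ) :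
    dOp m = ((pderiv 0 : Derivation ℂ (MvPolynomial (Fin 3) ℂ) _).toLinearMap)^(m 0) *
      (((pderiv 1 : Derivation ℂ (MvPolynomial (Fin 3) ℂ) _).toLinearMap)^(m 1) *
      (((pderiv 2 : Derivation ℂ (MvPolynomial (Fin 3) ℂ) _).toLinearMap)^(m 2) * 1)) := rfl

abbrev FF : MvPolynomial (Fin 3) ℂ := X 0 ^ 2 * X 2 + X 1 * X 2 ^ 2

def m200 : Fin 3 →₀ ℕ := Finsupp.single 0 2
def m110 : Fin 3 →₀ ℕ := Finsupp.single 0 1 + Finsupp.single 1 1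
def m101 : Fin 3 →₀ ℕ := Finsupp.single 0 1 + Finsupp.single 2 1
def m020 : Fin 3 →₀ ℕ := Finsupp.single 1 2
def m011 : Fin 3 →₀ ℕ := Finsupp.single 1 1 + Finsupp.single 2 1
def m002 : Fin 3 →₀ ℕ := Finsupp.single 2 2

lemma D200 (c : ℂ) : diamond (monomial m200 c) FF = C c * (2 * X 2) := by
  rw [diamond_monomial, dOp3, smul_eq_C_mul]
  congr 1
  simp [m200, Module.End.mul_apply, pow_succ, pderiv_mul, pderiv_X_self, pderiv_X_of_ne,
    Finsupp.single_apply]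
  ring

lemma D110 (c : ℂ) : diamond (monomial m110 c) FF = 0 := by
  rw [diamond_monomial, dOp3, smul_eq_C_mul]
  simp [m110, Module.End.mul_apply, pow_succ, pderiv_mul, pderiv_X_self, pderiv_X_of_ne,
    Finsupp.single_apply]

lemma D101 (c : ℂ) : diamond (monomial m101 c) FF = C c * (2 * X 0) := by
  rw [diamond_monomial, dOp3, smul_eq_C_mul]
  congr 1
  simp [m101, Module.End.mul_apply, pow_succ, pderiv_mul, pderiv_X_self, pderiv_X_of_ne,
    Finsupp.single_apply]
  ring

lemma D020 (c : ℂ) : diamond (monomial m020 c) FF = 0 := by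
  rw [diamond_monomial, dOp3, smul_eq_C_mul]
  simp [m020, Module.End.mul_apply, pow_succ, pderiv_mul, pderiv_X_self, pderiv_X_of_ne,
    Finsupp.single_apply]

lemma D011 (c : ℂ) : diamond (monomial m011 c) FF = C c * (2 * X 2) := by
  rw [diamond_monomial, dOp3, smul_eq_C_mul]
  congr 1
  simp [m011, Module.End.mul_apply, pow_succ, pderiv_mul, pderiv_X_self, pderiv_X_of_ne,
    Finsupp.single_apply]
  ring

lemma D002 (c : ℂ) : diamond (monomial m002 c) FF = C c * (2 * X 1) := by
  rw [diamond_monomial, dOp3, smul_eq_C_mul]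
  congr 1
  simp [m002, Module.End.mul_apply, pow_succ, pderiv_mul, pderiv_X_self, pderiv_X_of_ne,
    Finsupp.single_apply]
  ring

lemma diamond_add {n : ℕ} (p q F : MvPolynomial (Fin n) ℂ) :
    diamond (p + q) F = diamond p F + diamond q F := by
  simp [diamond, map_add]

lemma diamond_sub {n : ℕ} (p q F : MvPolynomial (Fin n) ℂ) :
    diamond (p - q) F = diamond p F - diamond q F := by
  simp [diamond, map_sub]

lemma fs_eq_iff (m m' : Fin 3 →₀ ℕ) : m = m' ↔ m 0 = m' 0 ∧ m 1 = m' 1 ∧ m 2 = m' 2 := by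
  constructor
  · rintro rfl; exact ⟨rfl, rfl, rfl⟩
  · rintro ⟨h0, h1, h2⟩
    ext i
    fin_cases i <;> assumption

lemma deg3 (d : Fin 3 →₀ ℕ) : d.degree = d 0 + d 1 + d 2 := by
  rw [Finsupp.degree_apply, Finset.sum_subset (Finset.subset_univ d.support)
    (fun i _ h => Finsupp.notMem_support_iff.1 h), Fin.sum_univ_three]

lemma rep (h : MvPolynomial (Fin 3) ℂ) (hh : h ∈ homogeneousSubmodule (Fin 3) ℂ 2) :
    h = monomial m200 (coeff m200 h) + monomial m110 (coeff m110 h) +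
      monomial m101 (coeff m101 h) + monomial m020 (coeff m020 h) +
      monomial m011 (coeff m011 h) + monomial m002 (coeff m002 h) := by
  have hhom : h.IsHomogeneous 2 := (mem_homogeneousSubmodule 2 h).1 hh
  ext m
  simp only [coeff_add, coeff_monomial]
  by_cases hd : m 0 + m 1 + m 2 = 2
  · -- enumerate
    have h0 : m 0 ≤ 2 := by omega
    have h1 : m 1 ≤ 2 := by omega
    have h2 : m 2 ≤ 2 := by omega
    interval_cases hm0 : m 0 <;> interval_cases hm1 : m 1 <;> interval_cases hm2 : m 2 <;>
      first
      | omega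
      | (first
          | (have hm : m = m200 := by
               rw [fs_eq_iff]
               refine ⟨?_, ?_, ?_⟩ <;> simp [m200, hm0, hm1, hm2]
             rw [hm])
          | (have hm : m = m110 := by
               rw [fs_eq_iff]
               refine ⟨?_, ?_, ?_⟩ <;> simp [m110, hm0, hm1, hm2]
             rw [hm])
          | (have hm : m = m101 := by
               rw [fs_eq_iff]
               refine ⟨?_, ?_, ?_⟩ <;> simp [m101, hm0, hm1, hm2]
             rw [hm])
          | (have hm : m = m020 := by
               rw [fs_eq_iff]
               refine ⟨?_, ?_, ?_⟩ <;> simp [m020, hm0, hm1, hm2]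
             rw [hm])
          | (have hm : m = m011 := by
               rw [fs_eq_iff]
               refine ⟨?_, ?_, ?_⟩ <;> simp [m011, hm0, hm1, hm2]
             rw [hm])
          | (have hm : m = m002 := by
               rw [fs_eq_iff]
               refine ⟨?_, ?_, ?_⟩ <;> simp [m002, hm0, hm1, hm2]
             rw [hm])) <;>
        simp [fs_eq_iff, m200, m110, m101, m020, m011, m002]
  · have : coeff m h = 0 := hhom.coeff_eq_zero (by rw [deg3]; omega)
    rw [this]
    have H : ∀ m' : Fin 3 →₀ ℕ, m' 0 + m' 1 + m' 2 = 2 →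
        (if m' = m then coeff m' h else 0) = 0 := by
      intro m' hm' 
      rw [if_neg]
      rintro rfl
      exact hd hm'
    rw [H m200 (by simp [m200]), H m110 (by simp [m110, Finsupp.single_apply]),
      H m101 (by simp [m101, Finsupp.single_apply]), H m020 (by simp [m020]),
      H m011 (by simp [m011, Finsupp.single_apply]), H m002 (by simp [m002])]
    simp

lemma X2_eq (i : Fin 3) : (X i : MvPolynomial (Fin 3) ℂ) ^ 2 = monomial (Finsupp.single i 2) 1 :=
  X_pow_eq_monomial

lemma XX_eq (i j : Fin 3) : (X i : MvPolynomial (Fin 3) ℂ) * X j =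
    monomial (Finsupp.single i 1 + Finsupp.single j 1) 1 := by
  have h : (X i : MvPolynomial (Fin 3) ℂ) * X j = X i ^ 1 * X j ^ 1 := by ring
  rw [h, X_pow_eq_monomial, X_pow_eq_monomial, monomial_mul, one_mul]


/-- The degree-2 component of the apolarity annihilator of the cubic `y₁²y₃ + y₂y₃²` is
spanned by `x₁² − x₂x₃, x₁x₂, x₂²`, and these three quadrics have a common zero in `ℂ³`
away from the origin. -/
theorem c4_perp_quadrics :
    (∀ h : MvPolynomial (Fin 3) ℂ,
      (h ∈ homogeneousSubmodule (Fin 3) ℂ 2 ∧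
          diamond h (X 0 ^ 2 * X 2 + X 1 * X 2 ^ 2) = 0) ↔
        h ∈ Submodule.span ℂ
          ({X 0 ^ 2 - X 1 * X 2, X 0 * X 1, X 1 ^ 2} :
            Set (MvPolynomial (Fin 3) ℂ))) ∧
    ∃ x : Fin 3 → ℂ, x ≠ 0 ∧
      MvPolynomial.eval x (X 0 ^ 2 - X 1 * X 2 : MvPolynomial (Fin 3) ℂ) = 0 ∧
      MvPolynomial.eval x (X 0 * X 1 : MvPolynomial (Fin 3) ℂ) = 0 ∧
      MvPolynomial.eval x (X 1 ^ 2 : MvPolynomial (Fin 3) ℂ) = 0 := by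
  constructor
  · intro h
    constructor
    · rintro ⟨hh, hdmd⟩
      have hrep := rep h hh
      have hdia : diamond h (X 0 ^ 2 * X 2 + X 1 * X 2 ^ 2) =
          C (coeff m200 h) * (2 * X 2) + 0 + C (coeff m101 h) * (2 * X 0) + 0 +
            C (coeff m011 h) * (2 * X 2) + C (coeff m002 h) * (2 * X 1) := by
        conv_lhs => rw [hrep]
        rw [diamond_add, diamond_add, diamond_add, diamond_add, diamond_add,
          D200, D110, D101, D020, D011, D002]
      rw [hdmd] at hdia
      have e101 : coeff m101 h = 0 := by
        have := congrArg (eval ![1, 0, 0]) hdia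
        simp at this
        exact this
      have e002 : coeff m002 h = 0 := by
        have := congrArg (eval ![0, 1, 0]) hdia
        simp at this
        exact this
      have e011 : coeff m011 h = -coeff m200 h := by
        have := congrArg (eval ![0, 0, 1]) hdia
        simp at this
        linear_combination -this/2
      have hkey : h = coeff m200 h • (X 0 ^ 2 - X 1 * X 2) +
          coeff m110 h • (X 0 * X 1) + coeff m020 h • (X 1 ^ 2 : MvPolynomial (Fin 3) ℂ) := by
        conv_lhs => rw [hrep]
        rw [e101, e011, e002]
        simp only [X2_eq, XX_eq, smul_sub, smul_monomial, smul_eq_mul, mul_one, m200, m110,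
          m101, m020, m011, m002, map_zero, map_neg]
        ring
      rw [hkey]
      refine Submodule.add_mem _ (Submodule.add_mem _ ?_ ?_) ?_ <;>
        exact Submodule.smul_mem _ _ (Submodule.subset_span (by simp))
    · intro hs
      constructor
      · refine Submodule.span_le.2 ?_ hs
        rintro g hg
        simp only [Set.mem_insert_iff, Set.mem_singleton_iff] at hg
        have hX : ∀ i j : Fin 3, (X i * X j : MvPolynomial (Fin 3) ℂ) ∈
            homogeneousSubmodule (Fin 3) ℂ 2 := fun i j =>
          (mem_homogeneousSubmodule 2 _).2 ((isHomogeneous_X _ _).mul (isHomogeneous_X _ _))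
        rcases hg with rfl | rfl | rfl
        · have : (X 0 ^ 2 - X 1 * X 2 : MvPolynomial (Fin 3) ℂ) = X 0 * X 0 - X 1 * X 2 := by
            ring
          rw [this]
          exact SetLike.mem_coe.2 (Submodule.sub_mem _ (hX 0 0) (hX 1 2))
        · exact SetLike.mem_coe.2 (hX 0 1)
        · have : (X 1 ^ 2 : MvPolynomial (Fin 3) ℂ) = X 1 * X 1 := by ring
          rw [this]
          exact SetLike.mem_coe.2 (hX 1 1)
      · have hle : Submodule.span ℂ ({X 0 ^ 2 - X 1 * X 2, X 0 * X 1, X 1 ^ 2} :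
            Set (MvPolynomial (Fin 3) ℂ)) ≤
            Submodule.restrictScalars ℂ (perpIdeal FF) := by
          refine Submodule.span_le.2 ?_
          rintro g hg
          simp only [Set.mem_insert_iff, Set.mem_singleton_iff] at hg
          rcases hg with rfl | rfl | rfl
          · show diamond _ FF = 0
            rw [X2_eq, XX_eq, diamond_sub]
            rw [show Finsupp.single (0 : Fin 3) 2 = m200 from rfl,
              show Finsupp.single (1 : Fin 3) 1 + Finsupp.single 2 1 = m011 from rfl,
              D200, D011, sub_self]
          · show diamond _ FF = 0
            rw [XX_eq, show Finsupp.single (0 : Fin 3) 1 + Finsupp.single 1 1 = m110 from rfl,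
              D110]
          · show diamond _ FF = 0
            rw [X2_eq, show Finsupp.single (1 : Fin 3) 2 = m020 from rfl, D020]
        exact hle hs
  · refine ⟨![0, 0, 1], ?_, ?_, ?_, ?_⟩
    · intro hx
      have := congrFun hx 2
      simp at this
    · simp
    · simp
    · simp


end
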